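/- Step (a) of the classification proof: let X be a type and let w be a polygon word over X. Then there exist k : ℕ, pairwise distinct letters a₁, …, aₖ : X, and a polygon word w' over X in which every pair is discord and in which none of a₁, …, aₖ occurs, such that w ∼ [(a₁,true),(a₁,true),…,(aₖ,true),(aₖ,true)] ++ w'. (All occurrences of projective planes can be hived off, leaving a word with only discord letters.) -/

import Mathlib

namespace Surface

/-- A signed word over `X`: the entry `(a, true)` represents the edge `a`, and
`(a, false)` represents its inverse `ā`. -/
abbrev Word (X : Type*) := List (X × Bool)

/-- The inverse of a signed word: reverse it and negate every `Bool`. -/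
def wordInv {X : Type*} (w : Word X) : Word X :=
  (w.map fun p => (p.1, !p.2)).reverse

/-- The letter `a` occurs in the signed word `w`. -/
def Occurs {X : Type*} (a : X) (w : Word X) : Prop :=
  ∃ s : Bool, (a, s) ∈ w

/-- A polygon word: every letter that occurs, occurs exactly twice (counting `(a,true)`
and `(a,false)` together). -/
def IsPolygon {X : Type*} [DecidableEq X] (w : Word X) : Prop :=
  ∀ a : X, Occurs a w → (w.map Prod.fst).count a = 2

/-- The smallest equivalence relation on signed words closed under cyclicity, inversion,
cancellation, the discord rule and the concord rule. -/
inductive WEquiv {X : Type*} : Word X → Word X → Prop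
  | refl (w : Word X) : WEquiv w w
  | symm {w v : Word X} : WEquiv w v → WEquiv v w
  | trans {w v u : Word X} : WEquiv w v → WEquiv v u → WEquiv w u
  /-- (1) cyclicity -/
  | cyc (α : Word X) (x : X × Bool) : WEquiv (α ++ [x]) ([x] ++ α)
  /-- (2) inversion -/
  | inv (w : Word X) : WEquiv w (wordInv w)
  /-- (3) cancellation -/
  | cancel (α : Word X) (a : X) (s : Bool) (hα : ¬ Occurs a α) :
      WEquiv (α ++ [(a, s), (a, !s)]) α
  /-- (4) discord rule -/
  | discord (α β β' : Word X) (a : X) (s : Bool)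
      (hα : ¬ Occurs a α) (hβ : ¬ Occurs a β) (hβ' : ¬ Occurs a β') :
      WEquiv (α ++ [(a, s)] ++ β ++ β' ++ [(a, !s)])
             (α ++ [(a, s)] ++ β' ++ β ++ [(a, !s)])
  /-- (5) concord rule -/
  | concord (α β : Word X) (a : X) (s : Bool)
      (hα : ¬ Occurs a α) (hβ : ¬ Occurs a β) :
      WEquiv (α ++ [(a, s)] ++ β ++ [(a, s)])
             (α ++ wordInv β ++ [(a, s), (a, s)])

/-- The word `a₁a₁a₂a₂⋯aₖaₖ`, representing the connected sum of `k` projective planes. -/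
def PWord {X : Type*} {k : ℕ} (a : Fin k → X) : Word X :=
  (List.ofFn fun i => [(a i, true), (a i, true)]).flatten

/-- The word `a₁b₁ā₁b̄₁⋯aₙbₙāₙb̄ₙ`, representing the connected sum of `n` tori. -/
def TWord {X : Type*} {n : ℕ} (a b : Fin n → X) : Word X :=
  (List.ofFn fun i => [(a i, true), (b i, true), (a i, false), (b i, false)]).flatten

/-- `w` contains a concord pair: some letter occurs twice with the same sign. -/
def HasConcordPair {X : Type*} (w : Word X) : Prop :=
  ∃ (a : X) (s : Bool) (α β γ : Word X),
    w = α ++ [(a, s)] ++ β ++ [(a, s)] ++ γ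

/-- `w` contains two interleaved pairs: letters `a ≠ b` occurring in the pattern
`⋯a⋯b⋯a⋯b⋯`. -/
def HasInterleaved {X : Type*} (w : Word X) : Prop :=
  ∃ (a b : X) (s s' t t' : Bool) (α β γ δ ε : Word X), a ≠ b ∧
    w = α ++ [(a, s)] ++ β ++ [(b, t)] ++ γ ++ [(a, s')] ++ δ ++ [(b, t')] ++ ε

section Hive

variable {X : Type*}

@[simp] lemma wordInv_nil : wordInv ([] : Word X) = [] := rfl

@[simp] lemma wordInv_append (u v : Word X) : wordInv (u ++ v) = wordInv v ++ wordInv u := by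
  simp [wordInv]

@[simp] lemma wordInv_singleton (x : X) (s : Bool) : wordInv [(x,s)] = [(x,!s)] := rfl

@[simp] lemma wordInv_wordInv (w : Word X) : wordInv (wordInv w) = w := by
  simp only [wordInv, List.map_reverse, List.reverse_reverse, List.map_map]
  conv_rhs => rw [← List.map_id w]
  congr 1
  funext p
  simp

@[simp] lemma length_wordInv (w : Word X) : (wordInv w).length = w.length := by
  simp [wordInv]

@[simp] lemma map_fst_wordInv (w : Word X) :
    (wordInv w).map Prod.fst = (w.map Prod.fst).reverse := by
  simp [wordInv, List.map_reverse, List.map_map, Function.comp]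

lemma occurs_iff {a : X} {w : Word X} : Occurs a w ↔ a ∈ w.map Prod.fst := by
  constructor
  · rintro ⟨s, hs⟩; exact List.mem_map.2 ⟨(a,s), hs, rfl⟩
  · intro h
    obtain ⟨⟨b, s⟩, hb, rfl⟩ := List.mem_map.1 h
    exact ⟨s, hb⟩

@[simp] lemma occurs_append {a : X} {u v : Word X} :
    Occurs a (u ++ v) ↔ Occurs a u ∨ Occurs a v := by
  simp [Occurs, List.mem_append, exists_or]

@[simp] lemma occurs_wordInv {a : X} {w : Word X} : Occurs a (wordInv w) ↔ Occurs a w := by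
  simp [occurs_iff]

@[simp] lemma occurs_nil {a : X} : ¬ Occurs a ([] : Word X) := by simp [Occurs]

lemma occurs_pair {a x : X} {s t : Bool} : Occurs a [(x,s),(x,t)] ↔ a = x := by
  constructor
  · rintro ⟨u, hu⟩
    simp only [List.mem_cons, List.mem_singleton, Prod.mk.injEq] at hu
    rcases hu with ⟨h, _⟩ | (⟨h, _⟩ | h)
    · exact h
    · exact h
    · exact absurd h (by simp)
  · rintro rfl; exact ⟨s, by simp⟩

lemma not_occurs_iff_count [DecidableEq X] {a : X} {w : Word X} :
    ¬ Occurs a w ↔ (w.map Prod.fst).count a = 0 := by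
  rw [occurs_iff, List.count_eq_zero]

/-! ### Derived moves -/

lemma weq_of_eq {u v : Word X} (h : u = v) : WEquiv u v := h ▸ WEquiv.refl u

/-- Rotation: `α ++ β ∼ β ++ α`. -/
lemma weq_swap (α β : Word X) : WEquiv (α ++ β) (β ++ α) := by
  induction β generalizing α with
  | nil => simpa using WEquiv.refl α
  | cons x β ih =>
    have h1 : WEquiv ((α ++ [x]) ++ β) (β ++ (α ++ [x])) := ih (α ++ [x])
    have h2 : WEquiv ((β ++ α) ++ [x]) ([x] ++ (β ++ α)) := WEquiv.cyc (β ++ α) x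
    have e1 : α ++ x :: β = (α ++ [x]) ++ β := by simp
    have e2 : β ++ (α ++ [x]) = (β ++ α) ++ [x] := by simp
    have e3 : [x] ++ (β ++ α) = (x :: β) ++ α := by simp
    rw [e1]
    exact (h1.trans (weq_of_eq e2)).trans (h2.trans (weq_of_eq e3))

/-- Contextual concord rule. -/
lemma weq_concord_ctx (α β γ : Word X) (a : X) (s : Bool)
    (hα : ¬ Occurs a α) (hβ : ¬ Occurs a β) (hγ : ¬ Occurs a γ) :
    WEquiv (α ++ [(a,s)] ++ β ++ [(a,s)] ++ γ)
           (α ++ wordInv β ++ [(a,s),(a,s)] ++ γ) := by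
  have hγα : ¬ Occurs a (γ ++ α) := by simp [hγ, hα]
  have h1 : WEquiv ((α ++ [(a,s)] ++ β ++ [(a,s)]) ++ γ)
      (γ ++ (α ++ [(a,s)] ++ β ++ [(a,s)])) := weq_swap _ _
  have h2 : WEquiv ((γ ++ α) ++ [(a,s)] ++ β ++ [(a,s)])
      ((γ ++ α) ++ wordInv β ++ [(a,s),(a,s)]) := WEquiv.concord (γ ++ α) β a s hγα hβ
  have h3 : WEquiv ((γ ++ (α ++ wordInv β ++ [(a,s),(a,s)])))
      ((α ++ wordInv β ++ [(a,s),(a,s)]) ++ γ) := weq_swap _ _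
  have e0 : α ++ [(a,s)] ++ β ++ [(a,s)] ++ γ = (α ++ [(a,s)] ++ β ++ [(a,s)]) ++ γ := by
    simp
  have e1 : γ ++ (α ++ [(a,s)] ++ β ++ [(a,s)]) = (γ ++ α) ++ [(a,s)] ++ β ++ [(a,s)] := by
    simp
  have e2 : (γ ++ α) ++ wordInv β ++ [(a,s),(a,s)] = γ ++ (α ++ wordInv β ++ [(a,s),(a,s)]) := by
    simp
  have e3 : (α ++ wordInv β ++ [(a,s),(a,s)]) ++ γ = α ++ wordInv β ++ [(a,s),(a,s)] ++ γ := by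
    simp
  rw [e0]
  exact ((((h1.trans (weq_of_eq e1)).trans h2).trans (weq_of_eq e2)).trans h3).trans
    (weq_of_eq e3)

/-- Complement inversion at a leading adjacent pair. -/
lemma weq_cinv (y : X) (t : Bool) (M : Word X) (hy : ¬ Occurs y M) :
    WEquiv ([(y,t),(y,t)] ++ M) ([(y,t),(y,t)] ++ wordInv M) := by
  have hyi : ¬ Occurs y (wordInv M) := by simpa using hy
  have h1 : WEquiv ([(y,t),(y,t)] ++ M) (M ++ [(y,t),(y,t)]) := weq_swap _ _
  have h2 : WEquiv ([] ++ [(y,t)] ++ wordInv M ++ [(y,t)])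
      ([] ++ wordInv (wordInv M) ++ [(y,t),(y,t)]) :=
    WEquiv.concord [] (wordInv M) y t (by simp) hyi
  have h2' : WEquiv (M ++ [(y,t),(y,t)]) ([(y,t)] ++ wordInv M ++ [(y,t)]) := by
    refine (weq_of_eq ?_).trans ((h2.symm).trans (weq_of_eq ?_)) <;> simp
  have h3 : WEquiv (([(y,t)] ++ wordInv M) ++ [(y,t)]) ([(y,t)] ++ ([(y,t)] ++ wordInv M)) :=
    weq_swap _ _
  refine ((h1.trans h2').trans ((weq_of_eq ?_).trans (h3.trans (weq_of_eq ?_)))) <;> simp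

/-- Flip the sign of a leading adjacent pair. -/
lemma weq_flip (x : X) (s : Bool) (Z : Word X) (hx : ¬ Occurs x Z) :
    WEquiv ([(x,s),(x,s)] ++ Z) ([(x,!s),(x,!s)] ++ Z) := by
  have h1 : WEquiv ([(x,s),(x,s)] ++ Z) (wordInv ([(x,s),(x,s)] ++ Z)) := WEquiv.inv _
  have e1 : wordInv ([(x,s),(x,s)] ++ Z) = wordInv Z ++ [(x,!s),(x,!s)] := by
    simp [wordInv]
  have h2 : WEquiv (wordInv Z ++ [(x,!s),(x,!s)]) ([(x,!s),(x,!s)] ++ wordInv Z) := weq_swap _ _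
  have h3 : WEquiv ([(x,!s),(x,!s)] ++ wordInv Z) ([(x,!s),(x,!s)] ++ wordInv (wordInv Z)) :=
    weq_cinv x (!s) (wordInv Z) (by simpa using hx)
  refine ((h1.trans (weq_of_eq e1)).trans h2).trans (h3.trans (weq_of_eq ?_))
  simp

@[simp] lemma occurs_cons {a : X} {p : X × Bool} {w : Word X} :
    Occurs a (p :: w) ↔ a = p.1 ∨ Occurs a w := by
  constructor
  · rintro ⟨u, hu⟩
    rcases List.mem_cons.1 hu with h | h
    · left; rw [← h]
    · right; exact ⟨u, h⟩
  · rintro (h | ⟨u, hu⟩)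
    · exact ⟨p.2, by simp [h]⟩
    · exact ⟨u, List.mem_cons_of_mem _ hu⟩

@[simp] lemma wordInv_cons (p : X × Bool) (w : Word X) :
    wordInv (p :: w) = wordInv w ++ [(p.1, !p.2)] := by
  simp [wordInv]

@[simp] lemma occurs_singleton {a x : X} {s : Bool} : Occurs a [(x,s)] ↔ a = x := by
  simp [Occurs]

/-- PRIM: pull a far pair next to the leading pair, inverting both arcs. -/
lemma weq_prim (x y : X) (hxy : x ≠ y) (s t : Bool) (Z₁ Z₂ : Word X)
    (hx1 : ¬ Occurs x Z₁) (hx2 : ¬ Occurs x Z₂)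
    (hy1 : ¬ Occurs y Z₁) (hy2 : ¬ Occurs y Z₂) :
    WEquiv ([(x,s),(x,s)] ++ Z₁ ++ [(y,t),(y,t)] ++ Z₂)
           ([(x,!s),(x,!s)] ++ [(y,t),(y,t)] ++ wordInv Z₁ ++ wordInv Z₂) := by
  have hyx : y ≠ x := Ne.symm hxy
  have hA : WEquiv ([(x,s),(x,s)] ++ Z₁ ++ [(y,t),(y,t)] ++ Z₂)
      (([(y,t),(y,t)] ++ Z₂) ++ ([(x,s),(x,s)] ++ Z₁)) :=
    (weq_of_eq (by simp)).trans (weq_swap ([(x,s),(x,s)] ++ Z₁) ([(y,t),(y,t)] ++ Z₂))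
  have h1 : WEquiv ([(y,t),(y,t)] ++ [(x,s)] ++ wordInv Z₂ ++ [(x,s)] ++ Z₁)
      ([(y,t),(y,t)] ++ wordInv (wordInv Z₂) ++ [(x,s),(x,s)] ++ Z₁) :=
    weq_concord_ctx [(y,t),(y,t)] (wordInv Z₂) Z₁ x s
      (by simp [hxy]) (by simpa using hx2) hx1
  have hB : WEquiv (([(y,t),(y,t)] ++ Z₂) ++ ([(x,s),(x,s)] ++ Z₁))
      ([(y,t),(y,t)] ++ [(x,s)] ++ wordInv Z₂ ++ [(x,s)] ++ Z₁) :=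
    (weq_of_eq (by simp)).trans h1.symm
  have hM : ¬ Occurs y ([(x,s)] ++ wordInv Z₂ ++ [(x,s)] ++ Z₁) := by
    simp [hyx, hy1, hy2]
  have hC : WEquiv ([(y,t),(y,t)] ++ ([(x,s)] ++ wordInv Z₂ ++ [(x,s)] ++ Z₁))
      ([(y,t),(y,t)] ++ wordInv ([(x,s)] ++ wordInv Z₂ ++ [(x,s)] ++ Z₁)) :=
    weq_cinv y t _ hM
  have eM : [(y,t),(y,t)] ++ wordInv ([(x,s)] ++ wordInv Z₂ ++ [(x,s)] ++ Z₁)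
      = ([(y,t),(y,t)] ++ wordInv Z₁) ++ [(x,!s)] ++ Z₂ ++ [(x,!s)] ++ [] := by
    simp
  have hD : WEquiv (([(y,t),(y,t)] ++ wordInv Z₁) ++ [(x,!s)] ++ Z₂ ++ [(x,!s)] ++ [])
      (([(y,t),(y,t)] ++ wordInv Z₁) ++ wordInv Z₂ ++ [(x,!s),(x,!s)] ++ []) :=
    weq_concord_ctx ([(y,t),(y,t)] ++ wordInv Z₁) Z₂ [] x (!s)
      (by simp [hxy, hx1]) hx2 (by simp)
  have hE : WEquiv (([(y,t),(y,t)] ++ wordInv Z₁ ++ wordInv Z₂) ++ [(x,!s),(x,!s)])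
      ([(x,!s),(x,!s)] ++ ([(y,t),(y,t)] ++ wordInv Z₁ ++ wordInv Z₂)) :=
    weq_swap _ _
  exact ((((hA.trans hB).trans ((weq_of_eq (by simp)).trans hC)).trans
    ((weq_of_eq eM).trans hD)).trans ((weq_of_eq (by simp)).trans hE)).trans
    (weq_of_eq (by simp))

/-- PRIM2: pull a far pair next to the leading pair, flipping its sign and
swapping the two arcs (which are otherwise untouched). -/
lemma weq_prim2 (x y : X) (hxy : x ≠ y) (s t : Bool) (A B : Word X)
    (hx1 : ¬ Occurs x A) (hx2 : ¬ Occurs x B)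
    (hy1 : ¬ Occurs y A) (hy2 : ¬ Occurs y B) :
    WEquiv ([(x,s),(x,s)] ++ A ++ [(y,t),(y,t)] ++ B)
           ([(x,s),(x,s)] ++ [(y,!t),(y,!t)] ++ B ++ A) := by
  have h0 : WEquiv ([(x,s),(x,s)] ++ A ++ [(y,t),(y,t)] ++ B)
      (wordInv ([(x,s),(x,s)] ++ A ++ [(y,t),(y,t)] ++ B)) := WEquiv.inv _
  have e0 : wordInv ([(x,s),(x,s)] ++ A ++ [(y,t),(y,t)] ++ B)
      = (wordInv B ++ [(y,!t),(y,!t)] ++ wordInv A) ++ [(x,!s),(x,!s)] := by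
    simp
  have h1 : WEquiv ((wordInv B ++ [(y,!t),(y,!t)] ++ wordInv A) ++ [(x,!s),(x,!s)])
      ([(x,!s),(x,!s)] ++ (wordInv B ++ [(y,!t),(y,!t)] ++ wordInv A)) := weq_swap _ _
  have h2 : WEquiv ([(x,!s),(x,!s)] ++ wordInv B ++ [(y,!t),(y,!t)] ++ wordInv A)
      ([(x,!(!s)),(x,!(!s))] ++ [(y,!t),(y,!t)] ++ wordInv (wordInv B) ++ wordInv (wordInv A)) :=
    weq_prim x y hxy (!s) (!t) (wordInv B) (wordInv A)
      (by simpa using hx2) (by simpa using hx1) (by simpa using hy2) (by simpa using hy1)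
  exact ((h0.trans (weq_of_eq e0)).trans (h1.trans (weq_of_eq (by simp)))).trans
    (h2.trans (weq_of_eq (by simp)))

/-! ### Blocks of collected pairs -/

def blockWord (L : List (X × Bool)) : Word X := L.flatMap fun p => [p, p]

@[simp] lemma blockWord_nil : blockWord ([] : List (X × Bool)) = [] := rfl

@[simp] lemma blockWord_cons (p : X × Bool) (L : List (X × Bool)) :
    blockWord (p :: L) = p :: p :: blockWord L := rfl

@[simp] lemma occurs_blockWord {a : X} {L : List (X × Bool)} :
    Occurs a (blockWord L) ↔ a ∈ L.map Prod.fst := by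
  induction L with
  | nil => simp [Occurs]
  | cons p L ih => simp [ih]

/-- Turn a leading adjacent pair into a `true`-signed one. -/
lemma weq_mktrue (z : X) (r : Bool) (Z : Word X) (hz : ¬ Occurs z Z) :
    WEquiv ([(z,r),(z,r)] ++ Z) ([(z,true),(z,true)] ++ Z) := by
  cases r
  · simpa using weq_flip z false Z hz
  · exact WEquiv.refl _

/-- Normalize all signs in a block to `true`, sending the block around the word. -/
lemma weq_signfix : ∀ (L : List (X × Bool)) (u : Word X),
    (∀ p ∈ L, ¬ Occurs p.1 u) → (L.map Prod.fst).Nodup →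
    WEquiv (blockWord L ++ u) (u ++ blockWord (L.map fun p => (p.1, true))) := by
  intro L
  induction L with
  | nil => intro u _ _; simpa using WEquiv.refl u
  | cons p L ih =>
    obtain ⟨z, r⟩ := p
    intro u hfresh hnd
    simp only [List.map_cons, List.nodup_cons] at hnd
    have hzL : z ∉ L.map Prod.fst := hnd.1
    have hzu : ¬ Occurs z u := hfresh (z, r) List.mem_cons_self
    have hz : ¬ Occurs z (blockWord L ++ u) := by simp [hzL, hzu]
    have h1 : WEquiv (blockWord ((z,r) :: L) ++ u)
        ([(z,true),(z,true)] ++ (blockWord L ++ u)) :=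
      (weq_of_eq (by simp)).trans (weq_mktrue z r (blockWord L ++ u) hz)
    have h2 : WEquiv ([(z,true),(z,true)] ++ (blockWord L ++ u))
        ((blockWord L ++ u) ++ [(z,true),(z,true)]) := weq_swap _ _
    have h3 : WEquiv (blockWord L ++ (u ++ [(z,true),(z,true)]))
        ((u ++ [(z,true),(z,true)]) ++ blockWord (L.map fun p => (p.1, true))) := by
      refine ih (u ++ [(z,true),(z,true)]) ?_ hnd.2
      intro q hq
      have hq1 : ¬ Occurs q.1 u := hfresh q (List.mem_cons_of_mem _ hq)
      have hq2 : q.1 ≠ z := by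
        intro h
        exact hzL (h ▸ List.mem_map.2 ⟨q, hq, rfl⟩)
      simp [hq1, hq2]
    exact ((h1.trans h2).trans ((weq_of_eq (by simp)).trans h3)).trans (weq_of_eq (by simp))

/-- Extraction of one concord pair into the block. -/
lemma weq_extract [DecidableEq X] (L : List (X × Bool)) (α β γ : Word X) (a : X) (s : Bool)
    (hnd : (L.map Prod.fst).Nodup)
    (hα : ¬ Occurs a α) (hβ : ¬ Occurs a β) (hγ : ¬ Occurs a γ)
    (hfresh : ∀ p ∈ L, ¬ Occurs p.1 (α ++ [(a,s)] ++ β ++ [(a,s)] ++ γ)) :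
    ∃ (L' : List (X × Bool)) (u' : Word X),
      L'.map Prod.fst = a :: L.map Prod.fst ∧
      u'.length = α.length + β.length + γ.length ∧
      (∀ x, (u'.map Prod.fst).count x
          = (α.map Prod.fst).count x + (β.map Prod.fst).count x + (γ.map Prod.fst).count x) ∧
      WEquiv (blockWord L ++ (α ++ [(a,s)] ++ β ++ [(a,s)] ++ γ)) (blockWord L' ++ u') := by
  cases L with
  | nil =>
    refine ⟨[(a,s)], γ ++ α ++ wordInv β, by simp, by simp [add_comm, add_assoc, add_left_comm],
      ?_, ?_⟩
    · intro x
      simp [List.count_append, List.count_reverse]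
      omega
    · have h1 : WEquiv (α ++ [(a,s)] ++ β ++ [(a,s)] ++ γ)
          (α ++ wordInv β ++ [(a,s),(a,s)] ++ γ) := weq_concord_ctx α β γ a s hα hβ hγ
      have h2 : WEquiv ((α ++ wordInv β) ++ ([(a,s),(a,s)] ++ γ))
          (([(a,s),(a,s)] ++ γ) ++ (α ++ wordInv β)) := weq_swap _ _
      exact (weq_of_eq (by simp)).trans
        ((h1.trans ((weq_of_eq (by simp)).trans h2)).trans (weq_of_eq (by simp)))
  | cons p L'' =>
    obtain ⟨z, r⟩ := p
    have hu_a : Occurs a (α ++ [(a,s)] ++ β ++ [(a,s)] ++ γ) := ⟨s, by simp⟩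
    have hza : ¬ Occurs z (α ++ [(a,s)] ++ β ++ [(a,s)] ++ γ) :=
      hfresh (z, r) List.mem_cons_self
    have haz : a ≠ z := by
      rintro rfl; exact hza hu_a
    have hzα : ¬ Occurs z α := fun h => hza (by simp [h])
    have hzβ : ¬ Occurs z β := fun h => hza (by simp [h])
    have hzγ : ¬ Occurs z γ := fun h => hza (by simp [h])
    simp only [List.map_cons, List.nodup_cons] at hnd
    have hzL : z ∉ L''.map Prod.fst := hnd.1
    have haL : a ∉ L''.map Prod.fst := by
      intro h
      obtain ⟨q, hq, hq1⟩ := List.mem_map.1 h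
      exact hfresh q (List.mem_cons_of_mem _ hq) (hq1 ▸ hu_a)
    refine ⟨(a,s) :: (z,!r) :: L'', α ++ wordInv β ++ γ, by simp,
      by simp [add_comm, add_assoc, add_left_comm], ?_, ?_⟩
    · intro x
      simp [List.count_append, List.count_reverse]
      omega
    · have h1 : WEquiv (([(z,r),(z,r)] ++ blockWord L'' ++ α) ++ [(a,s)] ++ β ++ [(a,s)] ++ γ)
          (([(z,r),(z,r)] ++ blockWord L'' ++ α) ++ wordInv β ++ [(a,s),(a,s)] ++ γ) :=
        weq_concord_ctx _ β γ a s (by simp [haz, haL, hα]) hβ hγ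
      have h2 : WEquiv (([(z,r),(z,r)] ++ blockWord L'' ++ α ++ wordInv β)
            ++ ([(a,s),(a,s)] ++ γ))
          (([(a,s),(a,s)] ++ γ) ++ ([(z,r),(z,r)] ++ blockWord L'' ++ α ++ wordInv β)) :=
        weq_swap _ _
      have h3 : WEquiv ([(a,s),(a,s)] ++ γ ++ [(z,r),(z,r)]
            ++ (blockWord L'' ++ α ++ wordInv β))
          ([(a,s),(a,s)] ++ [(z,!r),(z,!r)] ++ (blockWord L'' ++ α ++ wordInv β) ++ γ) :=
        weq_prim2 a z haz s r γ (blockWord L'' ++ α ++ wordInv β)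
          hγ (by simp [haL, hα, hβ]) hzγ (by simp [hzL, hzα, hzβ])
      exact ((weq_of_eq (by simp)).trans h1).trans
        (((weq_of_eq (by simp)).trans h2).trans
          (((weq_of_eq (by simp)).trans h3).trans (weq_of_eq (by simp))))

lemma pword_eq_blockWord (L : List (X × Bool)) :
    PWord (fun i : Fin (L.map Prod.fst).length => (L.map Prod.fst).get i)
      = blockWord (L.map fun p => (p.1, true)) := by
  have h1 : (List.ofFn fun i : Fin (L.map Prod.fst).length =>
      [((L.map Prod.fst).get i, true), ((L.map Prod.fst).get i, true)])
      = (L.map Prod.fst).map (fun x => [(x,true),(x,true)]) := by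
    conv_rhs => rw [← List.ofFn_get (L.map Prod.fst)]
    rw [List.map_ofFn]
    rfl
  unfold PWord blockWord
  rw [h1, List.map_map]
  rw [show ((L.map fun p => (p.1, true)).flatMap fun p => [p, p])
      = ((L.map fun p => (p.1, true)).map fun p => [p, p]).flatten from rfl, List.map_map]
  rfl

/-- The terminal case: no concord pair left. -/
lemma weq_base [DecidableEq X] (L : List (X × Bool)) (u : Word X)
    (hpoly : IsPolygon u) (hnd : (L.map Prod.fst).Nodup)
    (hfresh : ∀ p ∈ L, ¬ Occurs p.1 u) (hc : ¬ HasConcordPair u) :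
    ∃ (k : ℕ) (a : Fin k → X) (w' : Word X),
      Function.Injective a ∧ IsPolygon w' ∧ ¬ HasConcordPair w' ∧
      (∀ i, ¬ Occurs (a i) w') ∧ WEquiv (blockWord L ++ u) (PWord a ++ w') := by
  refine ⟨(L.map Prod.fst).length, fun i => (L.map Prod.fst).get i, u,
    List.nodup_iff_injective_get.1 hnd, hpoly, hc, ?_, ?_⟩
  · intro i
    have hm : (L.map Prod.fst).get i ∈ L.map Prod.fst := List.get_mem _ i
    obtain ⟨q, hq, hq1⟩ := List.mem_map.1 hm
    show ¬ Occurs ((L.map Prod.fst).get i) u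
    rw [← hq1]
    exact hfresh q hq
  · have h1 : WEquiv (blockWord L ++ u) (u ++ blockWord (L.map fun p => (p.1, true))) :=
      weq_signfix L u hfresh hnd
    have h2 : WEquiv (u ++ blockWord (L.map fun p => (p.1, true)))
        (blockWord (L.map fun p => (p.1, true)) ++ u) := weq_swap _ _
    exact (h1.trans h2).trans (weq_of_eq (by rw [pword_eq_blockWord]))

lemma main_loop [DecidableEq X] : ∀ (n : ℕ) (L : List (X × Bool)) (u : Word X),
    u.length ≤ n → IsPolygon u → (L.map Prod.fst).Nodup →
    (∀ p ∈ L, ¬ Occurs p.1 u) →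
    ∃ (k : ℕ) (a : Fin k → X) (w' : Word X),
      Function.Injective a ∧ IsPolygon w' ∧ ¬ HasConcordPair w' ∧
      (∀ i, ¬ Occurs (a i) w') ∧ WEquiv (blockWord L ++ u) (PWord a ++ w') := by
  intro n
  induction n with
  | zero =>
    intro L u hlen hpoly hnd hfresh
    by_cases hc : HasConcordPair u
    · exfalso
      obtain ⟨a, s, α, β, γ, hu⟩ := hc
      have : u.length = α.length + 1 + β.length + 1 + γ.length := by
        simp [hu]
        omega
      omega
    · exact weq_base L u hpoly hnd hfresh hc
  | succ n ih =>
    intro L u hlen hpoly hnd hfresh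
    by_cases hc : HasConcordPair u
    · obtain ⟨a, s, α, β, γ, hu⟩ := hc
      have hOa : Occurs a u := ⟨s, by simp [hu]⟩
      have hcnt_a := hpoly a hOa
      have hexp : ∀ x : X, ((u.map Prod.fst).count x)
          = (α.map Prod.fst).count x + (β.map Prod.fst).count x + (γ.map Prod.fst).count x
            + (if x = a then 2 else 0) := by
        intro x
        by_cases hxa : x = a <;>
          simp [hu, List.count_append, List.count_cons, @eq_comm _ a x, hxa] <;> omega
      have h0 : (α.map Prod.fst).count a = 0 ∧ (β.map Prod.fst).count a = 0 ∧
          (γ.map Prod.fst).count a = 0 := by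
        have h := hexp a
        rw [hcnt_a] at h
        simp at h
        omega
      have hα : ¬ Occurs a α := not_occurs_iff_count.2 h0.1
      have hβ : ¬ Occurs a β := not_occurs_iff_count.2 h0.2.1
      have hγ : ¬ Occurs a γ := not_occurs_iff_count.2 h0.2.2
      obtain ⟨L', u', hL'1, hL'2, hL'3, hweq⟩ :=
        weq_extract L α β γ a s hnd hα hβ hγ (by rw [← hu]; exact hfresh)
      have hocc : ∀ x, Occurs x u' → x ≠ a ∧ Occurs x u := by
        intro x hx
        have hxc : 0 < (u'.map Prod.fst).count x :=
          List.count_pos_iff.2 (occurs_iff.1 hx)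
        rw [hL'3] at hxc
        constructor
        · rintro rfl
          rw [h0.1, h0.2.1, h0.2.2] at hxc
          exact absurd hxc (by simp)
        · rw [occurs_iff, ← List.count_pos_iff, hexp]
          omega
      have hpoly' : IsPolygon u' := by
        intro x hx
        obtain ⟨hxa, hxu⟩ := hocc x hx
        have h2 := hpoly x hxu
        rw [hexp x, if_neg hxa] at h2
        rw [hL'3 x]
        omega
      have hlen' : u'.length ≤ n := by
        have : u.length = α.length + 1 + β.length + 1 + γ.length := by
          simp [hu]
          omega
        omega
      have hnotL : a ∉ L.map Prod.fst := by
        intro h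
        obtain ⟨q, hq, hq1⟩ := List.mem_map.1 h
        exact hfresh q hq (hq1 ▸ hOa)
      have hnd' : (L'.map Prod.fst).Nodup := by
        rw [hL'1]
        exact List.nodup_cons.2 ⟨hnotL, hnd⟩
      have hfresh' : ∀ p ∈ L', ¬ Occurs p.1 u' := by
        intro p hp
        have hp1 : p.1 ∈ a :: L.map Prod.fst := by
          rw [← hL'1]; exact List.mem_map.2 ⟨p, hp, rfl⟩
        intro hocc'
        obtain ⟨hxa, hxu⟩ := hocc p.1 hocc'
        rcases List.mem_cons.1 hp1 with h | h
        · exact hxa h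
        · obtain ⟨q, hq, hq1⟩ := List.mem_map.1 h
          exact hfresh q hq (hq1 ▸ hxu)
      obtain ⟨k, aa, w', h1, h2, h3, h4, h5⟩ := ih L' u' hlen' hpoly' hnd' hfresh'
      refine ⟨k, aa, w', h1, h2, h3, h4, ?_⟩
      exact (weq_of_eq (by rw [hu])).trans (hweq.trans h5)
    · exact weq_base L u hpoly hnd hfresh hc


end Hive

/-- Step (a) of the classification proof: all projective planes can be hived off,
leaving a polygon word with only discord pairs, on fresh letters. -/
theorem hive_off_projective_planes {X : Type*} [DecidableEq X]
    (w : Word X) (hw : IsPolygon w) :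
    ∃ (k : ℕ) (a : Fin k → X) (w' : Word X),
      Function.Injective a ∧ IsPolygon w' ∧ ¬ HasConcordPair w' ∧
      (∀ i : Fin k, ¬ Occurs (a i) w') ∧ WEquiv w (PWord a ++ w') := by
  obtain ⟨k, a, w', h1, h2, h3, h4, h5⟩ :=
    main_loop w.length [] w le_rfl hw (by simp) (by simp)
  exact ⟨k, a, w', h1, h2, h3, h4, h5⟩

end Surface
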